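/- Let I ∈ ℍ be a quaternion with I² = −1 and let ℂ_I := ℝ + ℝI ⊆ ℍ be the associated slice complex plane. Let f, g : ℝ → ℍ be continuously differentiable 2π-periodic functions with g taking values in ℂ_I. Then for every n ∈ ℤ, the right Fourier coefficients satisfy F_{R,I}(fg)(n) = Σ_{m∈ℤ} F_{R,I}(f)(m) · F_{R,I}(g)(n − m), the series converging absolutely in ℍ. -/

import Mathlib

open Filter

noncomputable section

local notation "ℍ" => Quaternion ℝ

/-- `e^{Iθ} = cos θ + I sin θ` in the quaternions. -/
def expI (I : ℍ) (θ : ℝ) : ℍ :=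
  ((Real.cos θ : ℝ) : ℍ) + Real.sin θ • I

/-- The `n`-th right Fourier coefficient
`F_{R,I}(h)(n) = (1/(2π)) ∫_{−π}^{π} h(θ) e^{−Inθ} dθ` of a quaternion-valued function. -/
def fourierR (I : ℍ) (h : ℝ → ℍ) (n : ℤ) : ℍ :=
  (1 / (2 * Real.pi)) • ∫ θ in (-Real.pi)..Real.pi, h θ * expI I (-(n : ℝ) * θ)

namespace FourierRAux

open MeasureTheory Real

/-! ### The embedding of `ℂ` onto the slice `ℝ + ℝI` -/

def phi (I : ℍ) (z : ℂ) : ℍ := ((z.re : ℝ) : ℍ) + z.im • I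

def phiL (I : ℍ) : ℂ →L[ℝ] ℍ :=
  LinearMap.toContinuousLinearMap
    { toFun := phi I
      map_add' := by
        intro z w
        simp only [phi, Complex.add_re, Complex.add_im, add_smul]
        push_cast
        abel
      map_smul' := by
        intro r z
        simp only [phi, Complex.real_smul, Complex.mul_re, Complex.mul_im, Complex.ofReal_re,
          Complex.ofReal_im, RingHom.id_apply, smul_add, smul_smul, Quaternion.smul_coe,
          zero_mul, mul_zero, sub_zero, add_zero, zero_add] }

@[simp] lemma phiL_apply (I : ℍ) (z : ℂ) : phiL I z = phi I z := rfl

variable {I : ℍ}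

lemma I_re (hI : I ^ 2 = -1) : I.re = 0 := by
  rw [sq] at hI
  have h1 := congrArg QuaternionAlgebra.re hI
  have h2 := congrArg QuaternionAlgebra.imI hI
  have h3 := congrArg QuaternionAlgebra.imJ hI
  have h4 := congrArg QuaternionAlgebra.imK hI
  simp [Quaternion.re_mul, Quaternion.imI_mul, Quaternion.imJ_mul, Quaternion.imK_mul,
    Quaternion.re_one, Quaternion.imI_one, Quaternion.imJ_one, Quaternion.imK_one]
    at h1 h2 h3 h4
  have hsq : I.re ^ 2 = 0 := by
    nlinarith [sq_nonneg I.re, sq_nonneg I.imI, sq_nonneg I.imJ, sq_nonneg I.imK]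
  exact pow_eq_zero_iff (by norm_num) |>.mp hsq

lemma normSq_I (hI : I ^ 2 = -1) : Quaternion.normSq I = 1 := by
  have h : Quaternion.normSq I ^ 2 = 1 := by
    have := congrArg Quaternion.normSq hI
    rw [map_pow] at this
    simpa using this
  nlinarith [Quaternion.normSq_nonneg (a := I)]

lemma phi_mul (hre : I.re = 0) (hn : Quaternion.normSq I = 1) (z w : ℂ) :
    phi I (z * w) = phi I z * phi I w := by
  have hs : I.imI ^ 2 + I.imJ ^ 2 + I.imK ^ 2 = 1 := by
    have h := Quaternion.normSq_def' (a := I)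
    rw [hn, hre] at h
    nlinarith [h]
  simp only [phi, Complex.mul_re, Complex.mul_im]
  ext
  · simp [Quaternion.re_mul, Quaternion.re_smul, hre, smul_eq_mul]
    linear_combination (z.im * w.im) * hs
  · simp [Quaternion.imI_mul, Quaternion.re_smul, hre, smul_eq_mul]
    ring
  · simp [Quaternion.imJ_mul, Quaternion.re_smul, hre, smul_eq_mul]
    ring
  · simp [Quaternion.imK_mul, Quaternion.re_smul, hre, smul_eq_mul]
    ring

lemma norm_phi (hre : I.re = 0) (hn : Quaternion.normSq I = 1) (z : ℂ) :
    ‖phi I z‖ = ‖z‖ := by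
  have hs : I.imI ^ 2 + I.imJ ^ 2 + I.imK ^ 2 = 1 := by
    have h := Quaternion.normSq_def' (a := I)
    rw [hn, hre] at h
    nlinarith [h]
  have h1 : Quaternion.normSq (phi I z) = Complex.normSq z := by
    simp only [Quaternion.normSq_def', phi, Complex.normSq_apply]
    simp [Quaternion.re_smul, hre, smul_eq_mul]
    linear_combination (z.im ^ 2) * hs
  have h2 : ‖phi I z‖ ^ 2 = ‖z‖ ^ 2 := by
    rw [sq, ← Quaternion.normSq_eq_norm_mul_self, h1, Complex.sq_norm]
  calc ‖phi I z‖ = Real.sqrt (‖phi I z‖ ^ 2) := (Real.sqrt_sq (norm_nonneg _)).symm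
    _ = Real.sqrt (‖z‖ ^ 2) := by rw [h2]
    _ = ‖z‖ := Real.sqrt_sq (norm_nonneg _)

def cexp (t : ℝ) : ℂ := Complex.exp (t * Complex.I)

lemma cexp_mul_cexp (s t : ℝ) : cexp s * cexp t = cexp (s + t) := by
  rw [cexp, cexp, cexp, ← Complex.exp_add]; push_cast; ring_nf

@[simp] lemma norm_cexp (t : ℝ) : ‖cexp t‖ = 1 := by
  rw [cexp]; exact Complex.norm_exp_ofReal_mul_I t

lemma continuous_cexp (c : ℝ) : Continuous fun θ : ℝ => cexp (c * θ) := by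
  apply Complex.continuous_exp.comp
  fun_prop

lemma expI_eq_phi (t : ℝ) : expI I t = phi I (cexp t) := by
  simp [expI, phi, cexp, Complex.exp_ofReal_mul_I_re, Complex.exp_ofReal_mul_I_im]

lemma norm_expI (hre : I.re = 0) (hn : Quaternion.normSq I = 1) (t : ℝ) :
    ‖expI I t‖ = 1 := by rw [expI_eq_phi, norm_phi hre hn]; exact norm_cexp t

lemma continuous_expI (c : ℝ) : Continuous fun θ : ℝ => expI I (c * θ) := by
  simp only [expI_eq_phi]
  exact (phiL I).continuous.comp (continuous_cexp c)

def psiL (I : ℍ) : ℍ →L[ℝ] ℂ :=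
  LinearMap.toContinuousLinearMap
    { toFun := fun q => ⟨q.re, -((q * I).re)⟩
      map_add' := by
        intro x y; rw [Complex.ext_iff]; constructor <;> simp [add_mul] <;> ring
      map_smul' := by
        intro r x
        rw [Complex.ext_iff]
        constructor <;> simp [Quaternion.re_smul, smul_mul_assoc, smul_eq_mul] <;> ring }

lemma psiL_apply (q : ℍ) : psiL I q = ⟨q.re, -((q * I).re)⟩ := rfl

lemma phi_mk (I : ℍ) (a b : ℝ) : phi I ⟨a, b⟩ = ((a : ℝ) : ℍ) + b • I := rfl

lemma psiL_phi (hre : I.re = 0) (hII : I * I = -1) (z : ℂ) : psiL I (phi I z) = z := by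
  rw [psiL_apply]
  have h : (phi I z) * I = z.re • I + z.im • (-1 : ℍ) := by
    rw [phi, add_mul, smul_mul_assoc, hII, Quaternion.coe_mul_eq_smul]
  rw [phi] at h ⊢
  rw [h, Complex.ext_iff]
  constructor <;> simp [Quaternion.re_smul, Quaternion.re_one, hre, smul_eq_mul]

/-! ### Fourier coefficients on the circle of circumference `2π` -/

instance fct : Fact (0 < Real.pi - -Real.pi) := ⟨by linarith [Real.pi_pos]⟩

lemma hpi : -Real.pi < Real.pi := neg_lt_self Real.pi_pos

lemma fourier_coe (k : ℤ) (x : ℝ) :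
    (fourier k ((x : ℝ) : AddCircle (Real.pi - -Real.pi)) : ℂ) = cexp (k * x) := by
  rw [fourier_coe_apply, cexp]
  congr 1
  have h2 : ((Real.pi : ℂ) - -Real.pi) ≠ 0 := by
    have h3 : ((Real.pi : ℂ) - -Real.pi) = ((2 * Real.pi : ℝ) : ℂ) := by push_cast; ring
    rw [h3]
    exact_mod_cast (by positivity : (2 * Real.pi : ℝ) ≠ 0)
  push_cast
  rw [div_eq_iff h2]
  ring

lemma periodic_lift_continuous {T : ℝ} {u : ℝ → ℂ} (hp : Function.Periodic u T)
    (hu : Continuous u) : Continuous hp.lift :=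
  Continuous.quotient_liftOn' hu _

lemma fourierCoeff_lift_eq {u : ℝ → ℂ} (hp : Function.Periodic u (Real.pi - -Real.pi)) (k : ℤ) :
    fourierCoeff hp.lift k = fourierCoeffOn hpi u k := by
  rw [fourierCoeff_eq_intervalIntegral _ k (-Real.pi), fourierCoeffOn_eq_integral]
  rw [show (-Real.pi + (Real.pi - -Real.pi) : ℝ) = Real.pi by ring]
  simp only [Function.Periodic.lift_coe]

lemma summable_sq_fourierCoeffOn {u : ℝ → ℂ} (hp : Function.Periodic u (Real.pi - -Real.pi))
    (hu : Continuous u) :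
    Summable fun k : ℤ => ‖fourierCoeffOn hpi u k‖ ^ 2 := by
  have hcont : Continuous hp.lift := periodic_lift_continuous hp hu
  set U : C(AddCircle (Real.pi - -Real.pi), ℂ) := ⟨hp.lift, hcont⟩ with hU
  set F := ContinuousMap.toLp (E := ℂ) 2 AddCircle.haarAddCircle ℂ U with hF
  have hrepr : ∀ k, fourierBasis.repr F k = fourierCoeffOn hpi u k := by
    intro k
    rw [fourierBasis_repr, fourierCoeff_toLp, ← fourierCoeff_lift_eq hp k]
    rfl
  have hmem : Memℓp (fourierBasis.repr F) 2 := (fourierBasis.repr F).property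
  have hsum := hmem.summable (by norm_num)
  refine hsum.congr fun k => ?_
  rw [hrepr k]
  norm_num

lemma summable_norm_fourierCoeffOn {u : ℝ → ℂ} (hp : Function.Periodic u (2 * Real.pi))
    (hu : ContDiff ℝ 1 u) :
    Summable fun k : ℤ => ‖fourierCoeffOn hpi u k‖ := by
  set u' := deriv u with hu'def
  have hu'c : Continuous u' := hu.continuous_deriv le_rfl
  have hp' : Function.Periodic u' (2 * Real.pi) := by
    intro θ
    have hfun : (fun x => u (x + 2 * Real.pi)) = u := funext hp
    rw [hu'def, ← deriv_comp_add_const, hfun]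
  have hp'2 : Function.Periodic u' (Real.pi - -Real.pi) := by
    rw [show (Real.pi - -Real.pi) = 2 * Real.pi by ring]; exact hp'
  have hder : ∀ x, HasDerivAt u (u' x) x := fun x =>
    ((hu.differentiable one_ne_zero) x).hasDerivAt
  have h0 : u Real.pi = u (-Real.pi) := by
    have := hp (-Real.pi)
    rwa [show (-Real.pi + 2 * Real.pi : ℝ) = Real.pi by ring] at this
  have hrel : ∀ k : ℤ, k ≠ 0 →
      ‖fourierCoeffOn hpi u k‖ ≤ ‖fourierCoeffOn hpi u' k‖ * (1 / |(k : ℝ)|) := by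
    intro k hk
    rw [fourierCoeffOn_of_hasDerivAt hpi hk (fun x _ => hder x)
      (hu'c.intervalIntegrable _ _)]
    rw [h0, sub_self, mul_zero, zero_sub, norm_mul, norm_neg, norm_mul]
    have h1 : ‖(1 : ℂ) / (-2 * ↑Real.pi * Complex.I * ↑k)‖ = 1 / (2 * Real.pi * |(k : ℝ)|) := by
      rw [norm_div, norm_one]
      simp [map_mul, Complex.norm_intCast, abs_of_pos Real.pi_pos]
    have h2 : ‖((Real.pi : ℂ) - ((-Real.pi : ℝ) : ℂ))‖ = 2 * Real.pi := by
      rw [show ((Real.pi : ℂ) - ((-Real.pi : ℝ) : ℂ)) = (((2 * Real.pi : ℝ)) : ℂ) by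
        push_cast; ring,
        Complex.norm_real, Real.norm_eq_abs, abs_of_pos (by positivity)]
    rw [h1, h2]
    have hkpos : (0:ℝ) < |(k:ℝ)| := by
      simp [abs_pos]
      exact_mod_cast hk
    apply le_of_eq
    rw [mul_one_div]
    rw [one_div_mul_eq_div, div_eq_div_iff (by positivity) (ne_of_gt hkpos)]
    ring
  have hB : Summable (fun k : ℤ =>
      (‖fourierCoeffOn hpi u' k‖ ^ 2 + 1 / ((k : ℝ)) ^ 2) / 2) := by
    apply Summable.div_const
    exact (summable_sq_fourierCoeffOn hp'2 hu'c).add (summable_one_div_int_pow.mpr one_lt_two)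
  have hC : Summable (fun k : ℤ => if k = 0 then ‖fourierCoeffOn hpi u 0‖ else 0) := by
    apply summable_of_ne_finset_zero (s := ({0} : Finset ℤ))
    intro k hk
    simp only [Finset.mem_singleton] at hk
    simp [hk]
  refine Summable.of_nonneg_of_le (fun k => norm_nonneg _) (fun k => ?_) (hB.add hC)
  by_cases hk : k = 0
  · subst hk
    have h3 : (0:ℝ) ≤ (‖fourierCoeffOn hpi u' 0‖ ^ 2 + 1 / ((0 : ℤ) : ℝ) ^ 2) / 2 := by positivity
    simp only [if_true, eq_self_iff_true, ite_true]
    linarith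
  · simp only [if_neg hk, add_zero]
    refine (hrel k hk).trans ?_
    have e1 : (1 / |(k:ℝ)|) ^ 2 = 1 / ((k:ℝ)) ^ 2 := by rw [div_pow, one_pow, sq_abs]
    nlinarith [sq_nonneg (‖fourierCoeffOn hpi u' k‖ - 1 / |(k:ℝ)|), e1]

lemma hasSum_fourier_cexp {u : ℝ → ℂ} (hp : Function.Periodic u (2 * Real.pi))
    (hu : ContDiff ℝ 1 u) (θ : ℝ) :
    HasSum (fun k : ℤ => fourierCoeffOn hpi u k * cexp (k * θ)) (u θ) := by
  have hp2 : Function.Periodic u (Real.pi - -Real.pi) := by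
    rw [show (Real.pi - -Real.pi) = 2 * Real.pi by ring]; exact hp
  have hcont : Continuous hp2.lift := periodic_lift_continuous hp2 hu.continuous
  set U : C(AddCircle (Real.pi - -Real.pi), ℂ) := ⟨hp2.lift, hcont⟩ with hU
  have hcoeff : ∀ k, fourierCoeff (⇑U) k = fourierCoeffOn hpi u k := fun k =>
    fourierCoeff_lift_eq hp2 k
  have hsummable : Summable (fourierCoeff (⇑U)) := by
    apply Summable.of_norm
    refine (summable_norm_fourierCoeffOn hp hu).congr fun k => ?_
    rw [hcoeff k]
  have h := has_pointwise_sum_fourier_series_of_summable hsummable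
    ((θ : ℝ) : AddCircle (Real.pi - -Real.pi))
  have hfn : (fun k : ℤ => fourierCoeff (⇑U) k • fourier k ((θ : ℝ) : AddCircle (Real.pi - -Real.pi)))
      = fun k : ℤ => fourierCoeffOn hpi u k * cexp (k * θ) := by
    funext k
    rw [hcoeff k, smul_eq_mul, fourier_coe]
  rw [hfn] at h
  have hUθ : U ((θ : ℝ) : AddCircle (Real.pi - -Real.pi)) = u θ := Function.Periodic.lift_coe hp2 θ
  rwa [hUθ] at h

end FourierRAux

open FourierRAux MeasureTheory

set_option maxHeartbeats 2000000 in
/-- If `f, g : ℝ → ℍ` are continuously differentiable and `2π`-periodic and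
`g` takes values in the slice `ℂ_I = ℝ + ℝI`, then the right Fourier coefficients satisfy the
convolution formula `F_{R,I}(fg)(n) = Σ_{m ∈ ℤ} F_{R,I}(f)(m) F_{R,I}(g)(n − m)`, the series
converging absolutely. -/
theorem fourierR_mul (I : ℍ) (hI : I ^ 2 = -1)
    (f g : ℝ → ℍ) (hf : ContDiff ℝ 1 f) (hg : ContDiff ℝ 1 g)
    (hfp : Function.Periodic f (2 * Real.pi)) (hgp : Function.Periodic g (2 * Real.pi))
    (hgI : ∀ θ : ℝ, ∃ a b : ℝ, g θ = ((a : ℝ) : ℍ) + b • I) (n : ℤ) :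
    Summable (fun m : ℤ => ‖fourierR I f m * fourierR I g (n - m)‖) ∧
    fourierR I (fun θ => f θ * g θ) n = ∑' m : ℤ, fourierR I f m * fourierR I g (n - m) := by
  classical
  have hre : I.re = 0 := I_re hI
  have hn : Quaternion.normSq I = 1 := normSq_I hI
  have hII : I * I = -1 := by rw [← sq]; exact hI
  have hfc : Continuous f := hf.continuous
  -- the complex trace of g
  set G : ℝ → ℂ := fun θ => psiL I (g θ) with hGdef
  have hGc : ContDiff ℝ 1 G := (psiL I).contDiff.comp hg
  have hGcont : Continuous G := hGc.continuous
  have hphiG : ∀ θ, phi I (G θ) = g θ := by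
    intro θ
    obtain ⟨a, b, hab⟩ := hgI θ
    rw [hGdef]
    simp only
    rw [hab, ← phi_mk I a b, psiL_phi hre hII]
  have hGp : Function.Periodic G (2 * Real.pi) := by
    intro θ
    simp only [hGdef]
    rw [hgp θ]
  set γ : ℤ → ℂ := fun k => fourierCoeffOn FourierRAux.hpi G k with hγdef
  have hsumγ : Summable fun k : ℤ => ‖γ k‖ := summable_norm_fourierCoeffOn hGp hGc
  -- identification of the Fourier coefficients of g
  have hcg : ∀ k : ℤ, fourierR I g k = phi I (γ k) := by
    intro k
    have hint : IntervalIntegrable (fun θ => G θ * cexp (-(k : ℝ) * θ)) volume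
        (-Real.pi) Real.pi := (hGcont.mul (continuous_cexp _)).intervalIntegrable _ _
    have hfun : (fun θ => g θ * expI I (-(k : ℝ) * θ))
        = fun θ => phiL I (G θ * cexp (-(k : ℝ) * θ)) := by
      funext θ
      rw [phiL_apply, phi_mul hre hn, ← expI_eq_phi, hphiG]
    rw [fourierR, hfun, ContinuousLinearMap.intervalIntegral_comp_comm _ hint,
      ← (phiL I).map_smul]
    rw [phiL_apply]
    congr 1
    rw [hγdef]
    simp only
    rw [fourierCoeffOn_eq_integral]
    congr 1
    · rw [show (Real.pi - -Real.pi : ℝ) = 2 * Real.pi by ring]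
    · apply intervalIntegral.integral_congr
      intro x _
      dsimp only
      have harg : ((-k : ℤ) : ℝ) * x = -(k : ℝ) * x := by push_cast; ring
      rw [fourier_coe, harg, smul_eq_mul, mul_comm]
  have hnormcg : ∀ k : ℤ, ‖fourierR I g k‖ = ‖γ k‖ := fun k => by
    rw [hcg k, norm_phi hre hn]
  -- uniform bound on the Fourier coefficients of f
  set Cf : ℝ := (1 / (2 * Real.pi)) * ∫ θ in (-Real.pi)..Real.pi, ‖f θ‖ with hCf
  have hfb : ∀ m : ℤ, ‖fourierR I f m‖ ≤ Cf := by
    intro m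
    rw [fourierR, norm_smul, Real.norm_eq_abs, abs_of_pos (by positivity)]
    apply mul_le_mul_of_nonneg_left _ (by positivity)
    calc ‖∫ θ in (-Real.pi)..Real.pi, f θ * expI I (-(m : ℝ) * θ)‖
        ≤ ∫ θ in (-Real.pi)..Real.pi, ‖f θ * expI I (-(m : ℝ) * θ)‖ :=
          intervalIntegral.norm_integral_le_integral_norm (le_of_lt FourierRAux.hpi)
      _ = ∫ θ in (-Real.pi)..Real.pi, ‖f θ‖ := by
          apply intervalIntegral.integral_congr
          intro x _
          dsimp only
          rw [norm_mul, norm_expI hre hn, mul_one]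
  -- summability of the convolution series
  have hsumγ' : Summable fun m : ℤ => ‖γ (n - m)‖ := (Equiv.subLeft n).summable_iff.mpr hsumγ
  have hsum1 : Summable (fun m : ℤ => ‖fourierR I f m * fourierR I g (n - m)‖) := by
    refine Summable.of_nonneg_of_le (fun m => norm_nonneg _) (fun m => ?_) (hsumγ'.mul_left Cf)
    rw [norm_mul, hnormcg]
    exact mul_le_mul_of_nonneg_right (hfb m) (norm_nonneg _)
  refine ⟨hsum1, ?_⟩
  -- pointwise expansion of the product
  have hps : ∀ θ : ℝ, HasSum
      (fun k : ℤ => f θ * expI I (((k : ℝ) - n) * θ) * phi I (γ k))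
      (f θ * g θ * expI I (-(n : ℝ) * θ)) := by
    intro θ
    have h1 : HasSum (fun k : ℤ => γ k * cexp (k * θ)) (G θ) := hasSum_fourier_cexp hGp hGc θ
    have h2 := (phiL I).hasSum h1
    have h3 := (h2.mul_left (f θ)).mul_right (expI I (-(n : ℝ) * θ))
    have hval : f θ * phiL I (G θ) * expI I (-(n : ℝ) * θ)
        = f θ * g θ * expI I (-(n : ℝ) * θ) := by rw [phiL_apply, hphiG]
    rw [hval] at h3
    have hfun : (fun k : ℤ => f θ * phiL I (γ k * cexp (k * θ)) * expI I (-(n : ℝ) * θ))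
        = fun k : ℤ => f θ * expI I (((k : ℝ) - n) * θ) * phi I (γ k) := by
      funext k
      rw [phiL_apply]
      conv_rhs => rw [expI_eq_phi]
      conv_lhs => rw [expI_eq_phi]
      rw [mul_assoc, ← phi_mul hre hn, mul_assoc (γ k), cexp_mul_cexp,
        show ((k : ℝ) * θ + -(n : ℝ) * θ : ℝ) = ((k : ℝ) - n) * θ by ring,
        mul_comm (γ k), phi_mul hre hn, ← mul_assoc]
    rw [hfun] at h3
    exact h3
  -- interchange of sum and integral
  set μ : Measure ℝ := volume.restrict (Set.Ioc (-Real.pi) Real.pi) with hμ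
  have hFcont : ∀ k : ℤ, Continuous fun θ => f θ * expI I (((k : ℝ) - n) * θ) * phi I (γ k) :=
    fun k => (hfc.mul (continuous_expI _)).mul continuous_const
  have hFint : ∀ k : ℤ, Integrable (fun θ => f θ * expI I (((k : ℝ) - n) * θ) * phi I (γ k)) μ :=
    fun k => (hFcont k).integrableOn_Ioc
  have hFnormval : ∀ k : ℤ,
      (∫ θ, ‖f θ * expI I (((k : ℝ) - n) * θ) * phi I (γ k)‖ ∂μ)
        = (∫ θ, ‖f θ‖ ∂μ) * ‖γ k‖ := by
    intro k
    rw [← integral_mul_const]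
    apply integral_congr_ae
    apply Filter.Eventually.of_forall
    intro θ
    dsimp only
    rw [norm_mul, norm_mul, norm_expI hre hn, mul_one, norm_phi hre hn]
  have hFnorm : Summable (fun k : ℤ =>
      ∫ θ, ‖f θ * expI I (((k : ℝ) - n) * θ) * phi I (γ k)‖ ∂μ) := by
    rw [funext hFnormval]
    exact hsumγ.mul_left _
  have hswap := MeasureTheory.hasSum_integral_of_summable_integral_norm hFint hFnorm
  have htsum : (∫ θ, (∑' k : ℤ, f θ * expI I (((k : ℝ) - n) * θ) * phi I (γ k)) ∂μ)
      = ∫ θ, f θ * g θ * expI I (-(n : ℝ) * θ) ∂μ :=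
    integral_congr_ae (Filter.Eventually.of_forall fun θ => (hps θ).tsum_eq)
  rw [htsum] at hswap
  -- identification of the individual terms
  have hterm : ∀ k : ℤ, (1 / (2 * Real.pi)) •
      (∫ θ, f θ * expI I (((k : ℝ) - n) * θ) * phi I (γ k) ∂μ)
        = fourierR I f (n - k) * fourierR I g k := by
    intro k
    have hIki : Integrable (fun θ => f θ * expI I (((k : ℝ) - n) * θ)) μ :=
      (hfc.mul (continuous_expI _)).integrableOn_Ioc
    have h1 : (∫ θ, f θ * expI I (((k : ℝ) - n) * θ) * phi I (γ k) ∂μ)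
        = (∫ θ, f θ * expI I (((k : ℝ) - n) * θ) ∂μ) * phi I (γ k) := by
      have h := ((ContinuousLinearMap.mul ℝ ℍ).flip (phi I (γ k))).integral_comp_comm hIki
      simpa using h
    rw [h1, ← smul_mul_assoc]
    congr 1
    · rw [fourierR, ← intervalIntegral.integral_of_le (le_of_lt FourierRAux.hpi)]
      congr 1
      apply intervalIntegral.integral_congr
      intro x _
      dsimp only
      have harg : (-(((n - k : ℤ) : ℝ)) * x) = ((k : ℝ) - n) * x := by push_cast; ring
      rw [harg]
    · exact (hcg k).symm
  -- conclusion
  have hmain : fourierR I (fun θ => f θ * g θ) n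
      = (1 / (2 * Real.pi)) • ∫ θ, f θ * g θ * expI I (-(n : ℝ) * θ) ∂μ := by
    rw [fourierR, intervalIntegral.integral_of_le (le_of_lt FourierRAux.hpi)]
  have hfinal : HasSum (fun k : ℤ => fourierR I f (n - k) * fourierR I g k)
      (fourierR I (fun θ => f θ * g θ) n) := by
    have h := hswap.const_smul ((1 : ℝ) / (2 * Real.pi))
    rw [funext hterm] at h
    rw [hmain]
    exact h
  have hre2 : HasSum (fun m : ℤ => fourierR I f m * fourierR I g (n - m))
      (fourierR I (fun θ => f θ * g θ) n) := by
    refine ((Equiv.subLeft n).hasSum_iff).mp ?_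
    have hcomp : ((fun m : ℤ => fourierR I f m * fourierR I g (n - m)) ∘ (Equiv.subLeft n))
        = fun k : ℤ => fourierR I f (n - k) * fourierR I g k := by
      funext k
      simp [Equiv.subLeft, sub_sub_cancel]
    rw [hcomp]
    exact hfinal
  exact hre2.tsum_eq.symm
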